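/- Let b > 0, f ∈ ℝ[x] of degree at most n-1, and g ∈ ℝ[x] of degree at most n. Then (x·f) ⊞_b^n g = x·(f ⊞_b^{n-1} Δ_b g) + f ⊞_b^{n-1} Δ*_{b,n} g, where (Δ*_{b,n} g)(x) := n·g(x-b) - (x-b)·(Δ_b g)(x). -/

import Mathlib

open Polynomial Finset

/-- The backward finite difference operator `(Δ_b f)(x) = (f(x) - f(x-b))/b`. -/
noncomputable def deltab (b : ℝ) (f : Polynomial ℝ) : Polynomial ℝ :=
  Polynomial.C b⁻¹ * (f - f.comp (Polynomial.X - Polynomial.C b))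

/-- The `b`-additive (finite difference) convolution
`p ⊞_b^m r = ∑_{k=0}^m (Δ_b^k p)(x) · (Δ_b^{m-k} r)(0)`. -/
noncomputable def bconv (b : ℝ) (m : ℕ) (p r : Polynomial ℝ) : Polynomial ℝ :=
  ∑ k ∈ range (m + 1),
    (deltab b)^[k] p * Polynomial.C (((deltab b)^[m - k] r).eval 0)

/-- The "polar"-type operator `(Δ*_{b,n} g)(x) = n g(x-b) - (x-b)(Δ_b g)(x)`. -/
noncomputable def deltastar (b : ℝ) (n : ℕ) (g : Polynomial ℝ) : Polynomial ℝ :=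
  Polynomial.C (n : ℝ) * g.comp (Polynomial.X - Polynomial.C b) -
    (Polynomial.X - Polynomial.C b) * deltab b g

lemma deltab_add (b : ℝ) (p q : Polynomial ℝ) :
    deltab b (p + q) = deltab b p + deltab b q := by
  simp [deltab, add_comp]; ring

lemma deltab_C_mul (b c : ℝ) (p : Polynomial ℝ) :
    deltab b (Polynomial.C c * p) = Polynomial.C c * deltab b p := by
  simp [deltab, mul_comp]; ring

lemma deltab_sub (b : ℝ) (p q : Polynomial ℝ) :
    deltab b (p - q) = deltab b p - deltab b q := by
  simp [deltab, sub_comp]; ring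

lemma deltab_C (b c : ℝ) : deltab b (Polynomial.C c) = 0 := by
  simp [deltab]

lemma deltab_comp (b : ℝ) (p : Polynomial ℝ) :
    deltab b (p.comp (X - C b)) = (deltab b p).comp (X - C b) := by
  simp [deltab, sub_comp, mul_comp, comp_assoc]

lemma deltab_X_mul (b : ℝ) (hb : b ≠ 0) (f : Polynomial ℝ) :
    deltab b (X * f) = X * deltab b f + f.comp (X - C b) := by
  have h : (C b⁻¹ : Polynomial ℝ) * C b = 1 := by
    rw [← C_mul, inv_mul_cancel₀ hb, C_1]
  simp only [deltab, mul_comp, X_comp]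
  linear_combination (f.comp (X - C b)) * h

lemma deltab_shift_mul (b : ℝ) (hb : b ≠ 0) (h : Polynomial ℝ) :
    deltab b ((X - C b) * h) = (X - C b) * deltab b h + h.comp (X - C b) := by
  have hc : (C b⁻¹ : Polynomial ℝ) * C b = 1 := by
    rw [← C_mul, inv_mul_cancel₀ hb, C_1]
  simp only [deltab, mul_comp, X_comp, sub_comp, C_comp]
  linear_combination (h.comp (X - C b)) * hc

lemma comp_shift_eq (b : ℝ) (hb : b ≠ 0) (h : Polynomial ℝ) :
    h.comp (X - C b) = h - C b * deltab b h := by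
  have hc : (C b : Polynomial ℝ) * C b⁻¹ = 1 := by
    rw [← C_mul, mul_inv_cancel₀ hb, C_1]
  unfold deltab
  linear_combination (h - h.comp (X - C b)) * hc

lemma deltab_iter_X_mul (b : ℝ) (hb : b ≠ 0) (f : Polynomial ℝ) (k : ℕ) :
    (deltab b)^[k + 1] (X * f) =
      X * (deltab b)^[k + 1] f +
        C ((k : ℝ) + 1) * ((deltab b)^[k] f).comp (X - C b) := by
  induction k with
  | zero => simpa using deltab_X_mul b hb f
  | succ k ih =>
    rw [Function.iterate_succ_apply', ih, deltab_add, deltab_X_mul b hb,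
      deltab_C_mul, deltab_comp,
      ← Function.iterate_succ_apply' (deltab b) k,
      ← Function.iterate_succ_apply' (deltab b) (k + 1)]
    push_cast
    simp only [C_add, C_1]
    ring

lemma deltab_iter_deltastar (b : ℝ) (hb : b ≠ 0) (n : ℕ) (g : Polynomial ℝ) (m : ℕ) :
    (deltab b)^[m] (deltastar b n g) =
      C ((n : ℝ) - m) * ((deltab b)^[m] g).comp (X - C b) -
        (X - C b) * (deltab b)^[m + 1] g := by
  induction m with
  | zero => simp [deltastar]
  | succ m ih =>
    rw [Function.iterate_succ_apply', ih, deltab_sub, deltab_C_mul,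
      deltab_shift_mul b hb, deltab_comp,
      ← Function.iterate_succ_apply' (deltab b) m,
      ← Function.iterate_succ_apply' (deltab b) (m + 1)]
    push_cast
    simp only [C_sub, C_add, C_1]
    ring

lemma deltab_natDegree_le (b : ℝ) (f : Polynomial ℝ) (k : ℕ)
    (hf : f.natDegree ≤ k + 1) : (deltab b f).natDegree ≤ k := by
  rcases eq_or_ne f (f.comp (X - C b)) with h | h
  · simp [deltab, ← h]
  have hf0 : f ≠ 0 := by
    rintro rfl; simp at h
  have hdeg : (f - f.comp (X - C b)).degree < f.degree := by
    apply degree_sub_lt _ hf0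
    · rw [leadingCoeff_comp (by simp [natDegree_X_sub_C])]
      simp
    · have hc0 : f.comp (X - C b) ≠ 0 := by
        intro hc
        apply hf0
        have := congrArg (fun p => Polynomial.comp p (X + C b)) hc
        simpa [comp_assoc] using this
      rw [degree_eq_natDegree hf0, degree_eq_natDegree hc0, natDegree_comp]
      simp [natDegree_X_sub_C]
  have : (f - f.comp (X - C b)).natDegree ≤ k := by
    by_cases hz : f - f.comp (X - C b) = 0
    · simp [hz]
    · have h1 : (f - f.comp (X - C b)).natDegree < f.natDegree :=
        natDegree_lt_natDegree hz hdeg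
      omega
  calc (deltab b f).natDegree ≤ _ := natDegree_mul_le
    _ ≤ k := by simpa using this

lemma deltab_iter_eq_zero (b : ℝ) (f : Polynomial ℝ) (k : ℕ)
    (hf : f.natDegree ≤ k) : (deltab b)^[k + 1] f = 0 := by
  induction k generalizing f with
  | zero =>
    rw [eq_C_of_natDegree_le_zero hf]
    simpa using deltab_C b (f.coeff 0)
  | succ k ih =>
    rw [Function.iterate_succ_apply]
    exact ih _ (deltab_natDegree_le b f k hf)

lemma eval_neg_b (b : ℝ) (hb : b ≠ 0) (h : Polynomial ℝ) :
    h.eval (-b) = h.eval 0 - b * (deltab b h).eval 0 := by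
  have h0 : (deltab b h).eval 0 = b⁻¹ * (h.eval 0 - h.eval (-b)) := by
    simp [deltab]
  rw [h0]
  field_simp
  ring

lemma key2 (b : ℝ) (hb : b ≠ 0) (N : ℕ) (f g : Polynomial ℝ) (hf : f.natDegree ≤ N) :
    ∑ k ∈ range (N + 1),
        C ((k : ℝ) + 1) * (((deltab b)^[k] f).comp (X - C b)) *
          C (((deltab b)^[N - k] g).eval 0)
      = ∑ k ∈ range (N + 1),
          (deltab b)^[k] f * C (((deltab b)^[N - k] (deltastar b (N + 1) g)).eval 0) := by
  have hA : (deltab b)^[N + 1] f = 0 := deltab_iter_eq_zero b f N hf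
  have hshift :
      ∑ k ∈ range (N + 1),
          C ((k : ℝ) + 1) * C b * ((deltab b)^[k + 1] f) * C (((deltab b)^[N - k] g).eval 0)
        = ∑ k ∈ range (N + 1),
            C ((k : ℝ)) * C b * ((deltab b)^[k] f) * C (((deltab b)^[N + 1 - k] g).eval 0) := by
    rw [Finset.sum_range_succ, Finset.sum_range_succ'
      (f := fun k => C ((k : ℝ)) * C b * ((deltab b)^[k] f) * C (((deltab b)^[N + 1 - k] g).eval 0))]
    simp only [hA, Nat.cast_zero, C_0, zero_mul, mul_zero, add_zero, zero_mul, mul_zero]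
    apply Finset.sum_congr rfl
    intro k hk
    have h1 : N + 1 - (k + 1) = N - k := by omega
    rw [h1]
    push_cast
    ring
  calc
    ∑ k ∈ range (N + 1),
        C ((k : ℝ) + 1) * (((deltab b)^[k] f).comp (X - C b)) *
          C (((deltab b)^[N - k] g).eval 0)
      = ∑ k ∈ range (N + 1),
          (C ((k : ℝ) + 1) * ((deltab b)^[k] f) * C (((deltab b)^[N - k] g).eval 0)
            - C ((k : ℝ) + 1) * C b * ((deltab b)^[k + 1] f) * C (((deltab b)^[N - k] g).eval 0)) := by
        apply Finset.sum_congr rfl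
        intro k hk
        rw [comp_shift_eq b hb, ← Function.iterate_succ_apply' (deltab b) k]
        ring
    _ = ∑ k ∈ range (N + 1),
          C ((k : ℝ) + 1) * ((deltab b)^[k] f) * C (((deltab b)^[N - k] g).eval 0)
        - ∑ k ∈ range (N + 1),
            C ((k : ℝ) + 1) * C b * ((deltab b)^[k + 1] f) * C (((deltab b)^[N - k] g).eval 0) := by
        rw [Finset.sum_sub_distrib]
    _ = ∑ k ∈ range (N + 1),
          (C ((k : ℝ) + 1) * ((deltab b)^[k] f) * C (((deltab b)^[N - k] g).eval 0)
            - C ((k : ℝ)) * C b * ((deltab b)^[k] f) * C (((deltab b)^[N + 1 - k] g).eval 0)) := by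
        rw [hshift, Finset.sum_sub_distrib]
    _ = _ := by
        apply Finset.sum_congr rfl
        intro k hk
        have hk' : k ≤ N := by simpa [Nat.lt_succ_iff] using hk
        have h1 : N + 1 - k = (N - k) + 1 := by omega
        have hd : ((deltab b)^[N - k] (deltastar b (N + 1) g)).eval 0
            = ((k : ℝ) + 1) * ((deltab b)^[N - k] g).eval 0
              - (k : ℝ) * b * ((deltab b)^[(N - k) + 1] g).eval 0 := by
          rw [deltab_iter_deltastar b hb]
          have hcast : ((N + 1 : ℕ) : ℝ) - ((N - k : ℕ) : ℝ) = (k : ℝ) + 1 := by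
            rw [Nat.cast_sub hk']
            push_cast
            ring
          have he : ((deltab b)^[N - k] g).eval (-b)
              = ((deltab b)^[N - k] g).eval 0 - b * ((deltab b)^[N - k + 1] g).eval 0 := by
            rw [eval_neg_b b hb, ← Function.iterate_succ_apply' (deltab b) (N - k)]
          simp only [eval_sub, eval_mul, eval_C, eval_comp, eval_X, zero_sub, hcast]
          rw [he]
          ring
        rw [hd, h1]
        simp only [C_sub, C_add, C_mul, C_1]
        ring

/-- Recursive identity:
`(x f) ⊞_b^n g = x (f ⊞_b^{n-1} Δ_b g) + f ⊞_b^{n-1} Δ*_{b,n} g`. -/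
theorem stmt_7 (b : ℝ) (hb : 0 < b) (n : ℕ) (hn : 1 ≤ n) (f g : Polynomial ℝ)
    (hf : f.natDegree ≤ n - 1) (hg : g.natDegree ≤ n) :
    bconv b n (Polynomial.X * f) g =
      Polynomial.X * bconv b (n - 1) f (deltab b g) +
        bconv b (n - 1) f (deltastar b n g) := by
  have hb' : b ≠ 0 := hb.ne'
  obtain ⟨N, rfl⟩ : ∃ N, n = N + 1 := ⟨n - 1, by omega⟩
  simp only [Nat.add_sub_cancel] at hf ⊢
  have hA : (deltab b)^[N + 1] f = 0 := deltab_iter_eq_zero b f N hf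
  unfold bconv
  have hL : (∑ k ∈ range (N + 1 + 1),
        (deltab b)^[k] (X * f) * C (((deltab b)^[N + 1 - k] g).eval 0))
      = ((∑ k ∈ range (N + 1),
            X * ((deltab b)^[k + 1] f) * C (((deltab b)^[N - k] g).eval 0))
          + (∑ k ∈ range (N + 1),
              C ((k : ℝ) + 1) * (((deltab b)^[k] f).comp (X - C b)) *
                C (((deltab b)^[N - k] g).eval 0)))
        + X * f * C (((deltab b)^[N + 1] g).eval 0) := by
    rw [Finset.sum_range_succ']
    congr 1
    · rw [← Finset.sum_add_distrib]
      apply Finset.sum_congr rfl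
      intro k hk
      have h1 : N + 1 - (k + 1) = N - k := by omega
      rw [h1, deltab_iter_X_mul b hb' f k]
      ring
  have hR1 : (∑ k ∈ range (N + 1),
        X * ((deltab b)^[k + 1] f) * C (((deltab b)^[N - k] g).eval 0))
        + X * f * C (((deltab b)^[N + 1] g).eval 0)
      = X * ∑ k ∈ range (N + 1),
          (deltab b)^[k] f * C (((deltab b)^[N - k] (deltab b g)).eval 0) := by
    rw [Finset.mul_sum]
    rw [Finset.sum_range_succ'
      (f := fun k => X * ((deltab b)^[k] f * C (((deltab b)^[N - k] (deltab b g)).eval 0)))]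
    rw [Finset.sum_range_succ]
    simp only [hA, zero_mul, mul_zero, add_zero, Nat.sub_zero, Function.iterate_zero_apply]
    congr 1
    · apply Finset.sum_congr rfl
      intro k hk
      have hkN : k < N := mem_range.mp hk
      have h2 : (deltab b)^[N - (k + 1)] (deltab b g) = (deltab b)^[N - k] g := by
        rw [← Function.iterate_succ_apply]
        congr 1
        omega
      rw [h2]
      ring
    · have h2 : (deltab b)^[N] (deltab b g) = (deltab b)^[N + 1] g := by
        rw [← Function.iterate_succ_apply]
      rw [h2]
      ring
  rw [hL, key2 b hb' N f g hf, ← hR1]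
  ring
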